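/- Let Π be an instance of NotAllEqual 3-SAT with n clauses and G(Π)=(V,E), b, r the associated construction. In every (b,r)-partition of E, for every variable x: all the matching edges u^C_x v^C_x, where C ranges over the original clauses containing x, belong to the same spanning tree, and all the matching edges u^{C'}_x v^{C'}_x, where C' ranges over the copies of the clauses containing x, belong to the other spanning tree. -/
import Mathlib


/-!
Common definitions for formalizing the NP-completeness reduction from
NotAllEqual 3-SAT to (b,r)-partitions of graphs.

An instance of NotAllEqual 3-SAT with variables in `α` and `n` clauses is
given by `cl : Fin n → Fin 3 → α`, clause `i` consisting of the three
(distinct) variables `cl i 0, cl i 1, cl i 2`.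

The vertex set of the associated graph `G(Π)`: the special vertex `s`,
the `u`-vertices `u i o j` and the `v`-vertices `v i o j`, where `i : Fin n`
is a clause index, `o : Bool` tells whether we are in the gadget of the
original clause (`false`) or of its copy (`true`), and `j : Fin 3` is the
position of a variable inside the clause.
-/

inductive GVert (n : ℕ) : Type
  | s : GVert n
  | u : Fin n → Bool → Fin 3 → GVert n
  | v : Fin n → Bool → Fin 3 → GVert n
  deriving DecidableEq

/-- The occurrences of the variable `x`: the pairs (clause index, position)
where `x` appears. -/
def occs {α : Type*} [DecidableEq α] {n : ℕ} (cl : Fin n → Fin 3 → α) (x : α) :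
    Finset (Fin n × Fin 3) :=
  Finset.univ.filter (fun p => cl p.1 p.2 = x)

/-- The cyclic successor of an occurrence `p` among the occurrences of the
variable sitting at `p`; this is used to build the cycle `Δ_x`. -/
noncomputable def nextOcc {α : Type*} [DecidableEq α] {n : ℕ}
    (cl : Fin n → Fin 3 → α) (p : Fin n × Fin 3) : Fin n × Fin 3 :=
  (occs cl (cl p.1 p.2)).toList.next p (by simp [occs, Finset.mem_toList])

/-- The edges of `G(Π)`: the star at `s`, the triangles on `U^C`, the
matchings `E^C`, and the cycles `Δ_x` (which alternate `v`-vertices of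
original-clause gadgets and of copy gadgets; the cycle for the variable `x`
is `v p₁ false, v p₁ true, v p₂ false, v p₂ true, …` over the occurrences
`p₁, p₂, …` of `x` in cyclic order). -/
inductive EdgeSpec {α : Type*} [DecidableEq α] {n : ℕ} (cl : Fin n → Fin 3 → α) :
    GVert n → GVert n → Prop
  | star (i : Fin n) (o : Bool) (j : Fin 3) : EdgeSpec cl .s (.u i o j)
  | tri (i : Fin n) (o : Bool) {j j' : Fin 3} (h : j ≠ j') :
      EdgeSpec cl (.u i o j) (.u i o j')
  | mat (i : Fin n) (o : Bool) (j : Fin 3) : EdgeSpec cl (.u i o j) (.v i o j)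
  | cycA (p : Fin n × Fin 3) : EdgeSpec cl (.v p.1 false p.2) (.v p.1 true p.2)
  | cycB (p : Fin n × Fin 3) :
      EdgeSpec cl (.v p.1 true p.2) (.v (nextOcc cl p).1 false (nextOcc cl p).2)

/-- The graph `G(Π)` associated to the NotAllEqual 3-SAT instance. -/
noncomputable def gadgetGraph {α : Type*} [DecidableEq α] {n : ℕ}
    (cl : Fin n → Fin 3 → α) : SimpleGraph (GVert n) :=
  SimpleGraph.fromRel (EdgeSpec cl)

/-- The blue outdegree prescription `b`. -/
def bvec (n : ℕ) : GVert n → ℕ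
  | .s => 3 * n
  | .u _ _ _ => 1
  | .v _ o _ => if o then 0 else 1

/-- The red outdegree prescription `r`. -/
def rvec (n : ℕ) : GVert n → ℕ
  | .s => 3 * n
  | .u _ _ _ => 1
  | .v _ o _ => if o then 1 else 0

/-- `dir` is an orientation of the edge set `F`: every directed pair lies in
`F`, and every edge of `F` gets exactly one direction. -/
def IsOrientation {V : Type*} (F : Set (Sym2 V)) (dir : V → V → Prop) : Prop :=
  (∀ a b, dir a b → s(a, b) ∈ F) ∧
    ∀ a b, s(a, b) ∈ F → (dir a b ∨ dir b a) ∧ ¬(dir a b ∧ dir b a)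

/-- `dir` is an `m`-orientation of `F`: an orientation in which exactly `m v`
arcs leave each vertex `v`. -/
def IsMOrientation {V : Type*} (F : Set (Sym2 V)) (m : V → ℕ)
    (dir : V → V → Prop) : Prop :=
  IsOrientation F dir ∧ ∀ v, Nat.card {w // dir v w} = m v

/-- `B` and `R` partition the edges of `G` into two spanning trees. -/
def IsTreePartition {V : Type*} (G B R : SimpleGraph V) : Prop :=
  B ≤ G ∧ R ≤ G ∧ B.IsTree ∧ R.IsTree ∧
    Disjoint B.edgeSet R.edgeSet ∧ B.edgeSet ∪ R.edgeSet = G.edgeSet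

/-- `(B, R)` is a `(b,r)`-partition of (the edge set of) `G`: a partition
into a blue spanning tree having a `b`-orientation and a red spanning tree
having an `r`-orientation. -/
def IsBRPartition {V : Type*} (G : SimpleGraph V) (b r : V → ℕ)
    (B R : SimpleGraph V) : Prop :=
  IsTreePartition G B R ∧
    (∃ d, IsMOrientation B.edgeSet b d) ∧ ∃ d, IsMOrientation R.edgeSet r d

/-- `G` admits some `(b,r)`-partition. -/
def HasBRPartition {V : Type*} (G : SimpleGraph V) (b r : V → ℕ) : Prop :=
  ∃ B R, IsBRPartition G b r B R

/-- The blue/red coloring `c` (`true` = blue, `false` = red) satisfies the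
NotAllEqual 3-SAT instance: every clause contains a blue and a red variable. -/
def NAESatisfies {α : Type*} {n : ℕ} (cl : Fin n → Fin 3 → α) (c : α → Bool) :
    Prop :=
  ∀ i : Fin n, (∃ j, c (cl i j) = true) ∧ ∃ j, c (cl i j) = false

/-- The matching edge `u^C_x v^C_x` at occurrence `p`, in the original gadget
(`o = false`) or the copy gadget (`o = true`). -/
def mEdge {n : ℕ} (p : Fin n × Fin 3) (o : Bool) : Sym2 (GVert n) :=
  s(GVert.u p.1 o p.2, GVert.v p.1 o p.2)

section Aux

variable {α : Type*} [DecidableEq α] {n : ℕ} (cl : Fin n → Fin 3 → α)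

lemma mem_occs_iff {x : α} {p : Fin n × Fin 3} : p ∈ occs cl x ↔ cl p.1 p.2 = x := by
  simp [occs]

lemma nextOcc_eq_next {x : α} {a : Fin n × Fin 3} (ha : a ∈ occs cl x) :
    nextOcc cl a = (occs cl x).toList.next a (by rwa [Finset.mem_toList]) := by
  have hx : cl a.1 a.2 = x := (mem_occs_iff cl).mp ha
  subst hx
  rfl

lemma nextOcc_mem {x : α} {a : Fin n × Fin 3} (ha : a ∈ occs cl x) :
    nextOcc cl a ∈ occs cl x := by
  rw [nextOcc_eq_next cl ha]
  rw [← Finset.mem_toList]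
  exact List.next_mem _ _ _

private lemma reach_aux {β : Type*} [DecidableEq β] [Finite β] (l : List β) (hl : l.Nodup)
    (P : β → Prop) (hP : ∀ (a : β) (ha : a ∈ l), P a → P (l.next a ha))
    {p q : β} (hp : p ∈ l) (hq : q ∈ l) (h : P p) : P q := by
  rcases le_or_gt 2 l.length with hlen | hlen
  · have hcyc := List.isCycle_formPerm hl hlen
    have hsc : (l.formPerm).SameCycle p q :=
      hcyc.sameCycle ((List.formPerm_apply_mem_ne_self_iff _ hl _ hp).mpr hlen)
        ((List.formPerm_apply_mem_ne_self_iff _ hl _ hq).mpr hlen)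
    obtain ⟨i, _, hi⟩ := hsc.exists_pow_eq'
    have key : ∀ m : ℕ, P ((l.formPerm ^ m) p) ∧ (l.formPerm ^ m) p ∈ l := by
      intro m
      induction m with
      | zero => simpa using ⟨h, hp⟩
      | succ k ih =>
        have h1 : (l.formPerm ^ (k + 1)) p = l.formPerm ((l.formPerm ^ k) p) := by
          rw [pow_succ', Equiv.Perm.mul_apply]
        rw [h1, List.formPerm_apply_mem_eq_next hl _ ih.2]
        exact ⟨hP _ ih.2 ih.1, List.next_mem _ _ _⟩
    rw [← hi]
    exact (key i).1
  · have h1 : l.length = 1 := by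
      have : l ≠ [] := List.ne_nil_of_mem hp
      have : 0 < l.length := List.length_pos_iff.mpr this
      omega
    obtain ⟨a, rfl⟩ := List.length_eq_one_iff.mp h1
    simp only [List.mem_singleton] at hp hq
    subst hp; subst hq
    exact h

lemma occs_reach {x : α} (P : Fin n × Fin 3 → Prop)
    (hP : ∀ a ∈ occs cl x, P a → P (nextOcc cl a))
    {p q : Fin n × Fin 3} (hp : p ∈ occs cl x) (hq : q ∈ occs cl x) (h : P p) : P q := by
  refine reach_aux (occs cl x).toList (Finset.nodup_toList _) P ?_
    (Finset.mem_toList.mpr hp) (Finset.mem_toList.mpr hq) h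
  intro a ha hPa
  have ha' : a ∈ occs cl x := Finset.mem_toList.mp ha
  have := hP a ha' hPa
  rwa [nextOcc_eq_next cl ha'] at this

lemma exists_prevOcc {x : α} {q : Fin n × Fin 3} (hq : q ∈ occs cl x) :
    ∃ p ∈ occs cl x, nextOcc cl p = q := by
  refine occs_reach cl (fun a => ∃ p ∈ occs cl x, nextOcc cl p = a) ?_
    (nextOcc_mem cl hq) hq ⟨q, hq, rfl⟩
  intro a ha _
  exact ⟨a, ha, rfl⟩

lemma nextOcc_injOn {x : α} {a b : Fin n × Fin 3} (ha : a ∈ occs cl x) (hb : b ∈ occs cl x)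
    (hab : nextOcc cl a = nextOcc cl b) : a = b := by
  have ha' := Finset.mem_toList.mpr ha
  have hb' := Finset.mem_toList.mpr hb
  rw [nextOcc_eq_next cl ha, nextOcc_eq_next cl hb,
    ← List.formPerm_apply_mem_eq_next (Finset.nodup_toList _) _ ha',
    ← List.formPerm_apply_mem_eq_next (Finset.nodup_toList _) _ hb'] at hab
  exact (occs cl x).toList.formPerm.injective hab

lemma singleton_occs {x : α} {p₀ : Fin n × Fin 3} (hp₀ : p₀ ∈ occs cl x)
    (hfix : nextOcc cl p₀ = p₀) {q : Fin n × Fin 3} (hq : q ∈ occs cl x) : q = p₀ := by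
  refine occs_reach cl (fun a => a = p₀) ?_ hp₀ hq rfl
  intro a ha h
  subst h
  exact hfix

instance {n : ℕ} : Finite (GVert n) := by
  have hinj : Function.Injective (fun w : GVert n => match w with
      | .s => (none : Option (Fin n × Bool × Fin 3 × Bool))
      | .u i o j => some (i, o, j, false)
      | .v i o j => some (i, o, j, true)) := by
    intro a b h
    cases a <;> cases b <;> simp_all
  exact Finite.of_injective _ hinj

lemma out_zero {V : Type*} [Finite V] {F : Set (Sym2 V)} {m : V → ℕ} {d : V → V → Prop}
    (h : IsMOrientation F m d) {a : V} (ha : m a = 0) (w : V) : ¬ d a w := by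
  intro hw
  have h2 := h.2 a
  rw [ha] at h2
  have hne : Nonempty {w // d a w} := ⟨⟨w, hw⟩⟩
  have := Nat.card_pos (α := {w // d a w})
  omega

lemma out_unique {V : Type*} [Finite V] {F : Set (Sym2 V)} {m : V → ℕ} {d : V → V → Prop}
    (h : IsMOrientation F m d) {a : V} (ha : m a = 1) {w w' : V}
    (h1 : d a w) (h2 : d a w') : w = w' := by
  have hc := h.2 a
  rw [ha] at hc
  obtain ⟨z, hz⟩ := Nat.card_eq_one_iff_exists.mp hc
  have e1 := hz ⟨w, h1⟩
  have e2 := hz ⟨w', h2⟩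
  rw [← e2] at e1
  exact congrArg Subtype.val e1

lemma dir_forced {V : Type*} [Finite V] {F : Set (Sym2 V)} {m : V → ℕ} {d : V → V → Prop}
    (h : IsMOrientation F m d) {a b : V} (hab : s(a, b) ∈ F) (hb : m b = 0) : d a b :=
  ((h.1.2 a b hab).1).resolve_right (out_zero h hb a)

end Aux
section Adj

variable {α : Type*} [DecidableEq α] {n : ℕ} (cl : Fin n → Fin 3 → α)

lemma edgeSpec_inv {a b : GVert n} (h : EdgeSpec cl a b) :
    (∃ i o j, a = .s ∧ b = .u i o j) ∨
    (∃ i o j j', j ≠ j' ∧ a = .u i o j ∧ b = .u i o j') ∨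
    (∃ i o j, a = .u i o j ∧ b = .v i o j) ∨
    (∃ q : Fin n × Fin 3, a = .v q.1 false q.2 ∧ b = .v q.1 true q.2) ∨
    (∃ q : Fin n × Fin 3, a = .v q.1 true q.2 ∧
      b = .v (nextOcc cl q).1 false (nextOcc cl q).2) := by
  cases h with
  | star i o j => exact Or.inl ⟨i, o, j, rfl, rfl⟩
  | tri i o hjj => rename_i j j'; exact Or.inr (Or.inl ⟨i, o, j, j', hjj, rfl, rfl⟩)
  | mat i o j => exact Or.inr (Or.inr (Or.inl ⟨i, o, j, rfl, rfl⟩))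
  | cycA q => exact Or.inr (Or.inr (Or.inr (Or.inl ⟨q, rfl, rfl⟩)))
  | cycB q => exact Or.inr (Or.inr (Or.inr (Or.inr ⟨q, rfl, rfl⟩)))

lemma adj_vt (p : Fin n × Fin 3) (w : GVert n) :
    (gadgetGraph cl).Adj (.v p.1 true p.2) w ↔
      w = .u p.1 true p.2 ∨ w = .v p.1 false p.2 ∨
        w = .v (nextOcc cl p).1 false (nextOcc cl p).2 := by
  rw [gadgetGraph, SimpleGraph.fromRel_adj]
  constructor
  · rintro ⟨hne, h | h⟩
    · rcases edgeSpec_inv cl h with ⟨i,o,j,h1,h2⟩ | ⟨i,o,j,j',hjj,h1,h2⟩ |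
        ⟨i,o,j,h1,h2⟩ | ⟨q,h1,h2⟩ | ⟨q,h1,h2⟩
      · exact absurd h1 (by simp)
      · exact absurd h1 (by simp)
      · exact absurd h1 (by simp)
      · exact absurd h1 (by simp)
      · simp only [GVert.v.injEq] at h1
        obtain rfl : q = p := (Prod.ext h1.1.symm h1.2.2.symm)
        exact Or.inr (Or.inr h2)
    · rcases edgeSpec_inv cl h with ⟨i,o,j,h1,h2⟩ | ⟨i,o,j,j',hjj,h1,h2⟩ |
        ⟨i,o,j,h1,h2⟩ | ⟨q,h1,h2⟩ | ⟨q,h1,h2⟩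
      · exact absurd h2 (by simp)
      · exact absurd h2 (by simp)
      · simp only [GVert.v.injEq] at h2
        obtain ⟨rfl, rfl, rfl⟩ := h2
        exact Or.inl h1
      · simp only [GVert.v.injEq] at h2
        obtain rfl : q = p := (Prod.ext h2.1.symm h2.2.2.symm)
        exact Or.inr (Or.inl h1)
      · exact absurd h2 (by simp)
  · rintro (rfl | rfl | rfl)
    · exact ⟨by simp, Or.inr (EdgeSpec.mat p.1 true p.2)⟩
    · exact ⟨by simp, Or.inr (EdgeSpec.cycA p)⟩
    · exact ⟨by simp, Or.inl (EdgeSpec.cycB p)⟩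

lemma adj_vf (p : Fin n × Fin 3) (w : GVert n) :
    (gadgetGraph cl).Adj (.v p.1 false p.2) w ↔
      w = .u p.1 false p.2 ∨ w = .v p.1 true p.2 ∨
        ∃ q, nextOcc cl q = p ∧ w = .v q.1 true q.2 := by
  rw [gadgetGraph, SimpleGraph.fromRel_adj]
  constructor
  · rintro ⟨hne, h | h⟩
    · rcases edgeSpec_inv cl h with ⟨i,o,j,h1,h2⟩ | ⟨i,o,j,j',hjj,h1,h2⟩ |
        ⟨i,o,j,h1,h2⟩ | ⟨q,h1,h2⟩ | ⟨q,h1,h2⟩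
      · exact absurd h1 (by simp)
      · exact absurd h1 (by simp)
      · exact absurd h1 (by simp)
      · simp only [GVert.v.injEq] at h1
        obtain rfl : q = p := (Prod.ext h1.1.symm h1.2.2.symm)
        exact Or.inr (Or.inl h2)
      · exact absurd h1 (by simp)
    · rcases edgeSpec_inv cl h with ⟨i,o,j,h1,h2⟩ | ⟨i,o,j,j',hjj,h1,h2⟩ |
        ⟨i,o,j,h1,h2⟩ | ⟨q,h1,h2⟩ | ⟨q,h1,h2⟩
      · exact absurd h2 (by simp)
      · exact absurd h2 (by simp)
      · simp only [GVert.v.injEq] at h2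
        obtain ⟨rfl, rfl, rfl⟩ := h2
        exact Or.inl h1
      · exact absurd h2 (by simp)
      · simp only [GVert.v.injEq] at h2
        exact Or.inr (Or.inr ⟨q, (Prod.ext h2.1.symm h2.2.2.symm), h1⟩)
  · rintro (rfl | rfl | ⟨q, hq, rfl⟩)
    · exact ⟨by simp, Or.inr (EdgeSpec.mat p.1 false p.2)⟩
    · exact ⟨by simp, Or.inl (EdgeSpec.cycA p)⟩
    · refine ⟨by simp, Or.inr ?_⟩
      have := EdgeSpec.cycB (cl := cl) q
      rwa [hq] at this
end Adj
section Cross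

variable {α : Type*} [DecidableEq α] {n : ℕ} (cl : Fin n → Fin 3 → α)

lemma mem_occs_of_next {x : α} {q p : Fin n × Fin 3} (hq : nextOcc cl q = p)
    (hp : p ∈ occs cl x) : q ∈ occs cl x := by
  have h1 : q ∈ occs cl (cl q.1 q.2) := (mem_occs_iff cl).mpr rfl
  have h2 := nextOcc_mem cl h1
  rw [hq] at h2
  have h3 : cl p.1 p.2 = cl q.1 q.2 := (mem_occs_iff cl).mp h2
  rw [mem_occs_iff] at hp ⊢
  rw [← h3]
  exact hp

/-- The cycle edge `v^C_x v^{C'}_x` inside one occurrence gadget pair. -/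
def eAe {n : ℕ} (p : Fin n × Fin 3) : Sym2 (GVert n) :=
  s(GVert.v p.1 false p.2, GVert.v p.1 true p.2)

/-- The cycle edge from a copy `v`-vertex to the next original `v`-vertex. -/
noncomputable def eBe {α : Type*} [DecidableEq α] {n : ℕ} (cl : Fin n → Fin 3 → α)
    (p : Fin n × Fin 3) : Sym2 (GVert n) :=
  s(GVert.v (nextOcc cl p).1 false (nextOcc cl p).2, GVert.v p.1 true p.2)

lemma mEdge_mem (p : Fin n × Fin 3) (o : Bool) :
    mEdge p o ∈ (gadgetGraph cl).edgeSet := by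
  show s(GVert.u p.1 o p.2, GVert.v p.1 o p.2) ∈ _
  rw [SimpleGraph.mem_edgeSet, gadgetGraph, SimpleGraph.fromRel_adj]
  exact ⟨by simp, Or.inl (EdgeSpec.mat p.1 o p.2)⟩

lemma eAe_mem (p : Fin n × Fin 3) : eAe p ∈ (gadgetGraph cl).edgeSet := by
  show s(GVert.v p.1 false p.2, GVert.v p.1 true p.2) ∈ _
  rw [SimpleGraph.mem_edgeSet, gadgetGraph, SimpleGraph.fromRel_adj]
  exact ⟨by simp, Or.inl (EdgeSpec.cycA p)⟩

lemma eBe_mem (p : Fin n × Fin 3) : eBe cl p ∈ (gadgetGraph cl).edgeSet := by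
  show s(GVert.v (nextOcc cl p).1 false (nextOcc cl p).2, GVert.v p.1 true p.2) ∈ _
  rw [SimpleGraph.mem_edgeSet, gadgetGraph, SimpleGraph.fromRel_adj]
  exact ⟨by simp, Or.inr (EdgeSpec.cycB p)⟩

lemma exists_cross {V : Type*} {T : SimpleGraph V} (hT : T.Connected) (S : Set V)
    {a c : V} (ha : a ∈ S) (hc : c ∉ S) : ∃ z y, T.Adj z y ∧ z ∈ S ∧ y ∉ S := by
  obtain ⟨w⟩ := hT a c
  obtain ⟨d, _, h1, h2⟩ := w.exists_boundary_dart S ha hc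
  exact ⟨d.fst, d.snd, d.adj, h1, h2⟩

lemma crossA (T T' : SimpleGraph (GVert n)) (hTG : T ≤ gadgetGraph cl)
    (hTc : T.Connected) (hdisj : ∀ e, e ∈ T.edgeSet → e ∈ T'.edgeSet → False)
    {x : α} {p : Fin n × Fin 3} (hp : p ∈ occs cl x)
    (hB : ∀ q ∈ occs cl x, eBe cl q ∈ T'.edgeSet) :
    mEdge p false ∈ T.edgeSet ∨ mEdge p true ∈ T.edgeSet := by
  obtain ⟨z, y, hzy, hzS, hyS⟩ := exists_cross hTc
    ({GVert.v p.1 false p.2, GVert.v p.1 true p.2} : Set (GVert n))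
    (show GVert.v p.1 false p.2 ∈ _ from Or.inl rfl) (show GVert.s ∉ _ by simp)
  simp only [Set.mem_insert_iff, Set.mem_singleton_iff] at hzS hyS
  push_neg at hyS
  rcases hzS with rfl | rfl
  · rcases (adj_vf cl p y).mp (hTG hzy) with rfl | rfl | ⟨q, hq, rfl⟩
    · left
      show s(GVert.u p.1 false p.2, GVert.v p.1 false p.2) ∈ _
      rw [Sym2.eq_swap]
      exact (SimpleGraph.mem_edgeSet _).mpr hzy
    · exact absurd rfl hyS.2
    · have hqocc : q ∈ occs cl x := mem_occs_of_next cl hq hp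
      have hT1 : eBe cl q ∈ T.edgeSet := by
        show s(GVert.v (nextOcc cl q).1 false (nextOcc cl q).2, GVert.v q.1 true q.2) ∈ _
        rw [hq]
        exact (SimpleGraph.mem_edgeSet _).mpr hzy
      exact absurd (hB q hqocc) (fun h => hdisj _ hT1 h)
  · rcases (adj_vt cl p y).mp (hTG hzy) with rfl | rfl | rfl
    · right
      show s(GVert.u p.1 true p.2, GVert.v p.1 true p.2) ∈ _
      rw [Sym2.eq_swap]
      exact (SimpleGraph.mem_edgeSet _).mpr hzy
    · exact absurd rfl hyS.1
    · have hT1 : eBe cl p ∈ T.edgeSet := by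
        show s(GVert.v (nextOcc cl p).1 false (nextOcc cl p).2, GVert.v p.1 true p.2) ∈ _
        rw [Sym2.eq_swap]
        exact (SimpleGraph.mem_edgeSet _).mpr hzy
      exact absurd (hB p hp) (fun h => hdisj _ hT1 h)

lemma crossB (T T' : SimpleGraph (GVert n)) (hTG : T ≤ gadgetGraph cl)
    (hTc : T.Connected) (hdisj : ∀ e, e ∈ T.edgeSet → e ∈ T'.edgeSet → False)
    {x : α} {p : Fin n × Fin 3} (hp : p ∈ occs cl x)
    (hA : ∀ q ∈ occs cl x, eAe q ∈ T'.edgeSet) :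
    mEdge p true ∈ T.edgeSet ∨ mEdge (nextOcc cl p) false ∈ T.edgeSet := by
  have hnp : nextOcc cl p ∈ occs cl x := nextOcc_mem cl hp
  obtain ⟨z, y, hzy, hzS, hyS⟩ := exists_cross hTc
    ({GVert.v p.1 true p.2,
      GVert.v (nextOcc cl p).1 false (nextOcc cl p).2} : Set (GVert n))
    (show GVert.v p.1 true p.2 ∈ _ from Or.inl rfl) (show GVert.s ∉ _ by simp)
  simp only [Set.mem_insert_iff, Set.mem_singleton_iff] at hzS hyS
  push_neg at hyS
  rcases hzS with rfl | rfl
  · rcases (adj_vt cl p y).mp (hTG hzy) with rfl | rfl | rfl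
    · left
      show s(GVert.u p.1 true p.2, GVert.v p.1 true p.2) ∈ _
      rw [Sym2.eq_swap]
      exact (SimpleGraph.mem_edgeSet _).mpr hzy
    · have hT1 : eAe p ∈ T.edgeSet := by
        show s(GVert.v p.1 false p.2, GVert.v p.1 true p.2) ∈ _
        rw [Sym2.eq_swap]
        exact (SimpleGraph.mem_edgeSet _).mpr hzy
      exact absurd (hA p hp) (fun h => hdisj _ hT1 h)
    · exact absurd rfl hyS.2
  · rcases (adj_vf cl (nextOcc cl p) y).mp (hTG hzy) with rfl | rfl | ⟨q, hq, rfl⟩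
    · right
      show s(GVert.u (nextOcc cl p).1 false (nextOcc cl p).2,
        GVert.v (nextOcc cl p).1 false (nextOcc cl p).2) ∈ _
      rw [Sym2.eq_swap]
      exact (SimpleGraph.mem_edgeSet _).mpr hzy
    · have hT1 : eAe (nextOcc cl p) ∈ T.edgeSet := (SimpleGraph.mem_edgeSet _).mpr hzy
      exact absurd (hA _ hnp) (fun h => hdisj _ hT1 h)
    · have hqocc : q ∈ occs cl x := mem_occs_of_next cl hq hnp
      obtain rfl : q = p := nextOcc_injOn cl hqocc hp hq
      exact absurd rfl hyS.1

end Cross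
/-- In every `(b,r)`-partition of `G(Π)`, for every variable
`x`, all original matching edges `u^C_x v^C_x` over clauses `C` containing `x`
lie in the same spanning tree, and all copy matching edges
`u^{C'}_x v^{C'}_x` lie in the other spanning tree. -/
theorem stmt12 {α : Type*} [DecidableEq α] {n : ℕ} (cl : Fin n → Fin 3 → α)
    (hcl : ∀ i, Function.Injective (cl i)) (B R : SimpleGraph (GVert n))
    (hBR : IsBRPartition (gadgetGraph cl) (bvec n) (rvec n) B R) :
    ∀ x : α,
      (∀ p ∈ occs cl x, mEdge p false ∈ B.edgeSet ∧ mEdge p true ∈ R.edgeSet) ∨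
      (∀ p ∈ occs cl x, mEdge p false ∈ R.edgeSet ∧ mEdge p true ∈ B.edgeSet) := by
  obtain ⟨⟨hBG, hRG, hBtree, hRtree, hdisj, hunion⟩, ⟨dB, hdB⟩, ⟨dR, hdR⟩⟩ := hBR
  intro x
  have hnBR : ∀ {e : Sym2 (GVert n)}, e ∈ B.edgeSet → e ∈ R.edgeSet → False :=
    fun hb hr => Set.disjoint_left.mp hdisj hb hr
  have hnRB : ∀ e : Sym2 (GVert n), e ∈ R.edgeSet → e ∈ B.edgeSet → False :=
    fun _ hr hb => hnBR hb hr
  have hGor : ∀ {e : Sym2 (GVert n)}, e ∈ (gadgetGraph cl).edgeSet →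
      e ∈ B.edgeSet ∨ e ∈ R.edgeSet := by
    intro e he
    rw [← hunion] at he
    exact he
  have hdirB : ∀ i j i' j', s(GVert.v i false j, GVert.v i' true j') ∈ B.edgeSet →
      dB (GVert.v i false j) (GVert.v i' true j') :=
    fun i j i' j' h => dir_forced hdB h (by simp [bvec])
  have hdirR : ∀ i j i' j', s(GVert.v i false j, GVert.v i' true j') ∈ R.edgeSet →
      dR (GVert.v i' true j') (GVert.v i false j) :=
    fun i j i' j' h => dir_forced hdR (by rwa [Sym2.eq_swap] at h) (by simp [rvec])
  have hTlem : ∀ p ∈ occs cl x, nextOcc cl p ≠ p → eAe p ∈ R.edgeSet →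
      eBe cl p ∈ R.edgeSet → False := by
    intro p hp hne h1 h2
    have d1 := hdirR p.1 p.2 p.1 p.2 h1
    have d2 := hdirR (nextOcc cl p).1 (nextOcc cl p).2 p.1 p.2 h2
    have hu := out_unique hdR
      (show rvec n (GVert.v p.1 true p.2) = 1 by simp [rvec]) d1 d2
    simp only [GVert.v.injEq] at hu
    exact hne (Prod.ext hu.1 hu.2.2).symm
  have hFlem : ∀ p ∈ occs cl x, nextOcc cl p ≠ p → eAe (nextOcc cl p) ∈ B.edgeSet →
      eBe cl p ∈ B.edgeSet → False := by
    intro p hp hne h1 h2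
    have d1 := hdirB (nextOcc cl p).1 (nextOcc cl p).2 (nextOcc cl p).1 (nextOcc cl p).2 h1
    have d2 := hdirB (nextOcc cl p).1 (nextOcc cl p).2 p.1 p.2 h2
    have hu := out_unique hdB
      (show bvec n (GVert.v (nextOcc cl p).1 false (nextOcc cl p).2) = 1 by simp [bvec]) d1 d2
    simp only [GVert.v.injEq] at hu
    exact hne (Prod.ext hu.1 hu.2.2)
  by_cases hsing : ∃ p₀ ∈ occs cl x, nextOcc cl p₀ = p₀
  · obtain ⟨p₀, hp₀, hfix⟩ := hsing
    have hnbf : ∀ T : SimpleGraph (GVert n), T ≤ gadgetGraph cl →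
        ∀ y, T.Adj (GVert.v p₀.1 false p₀.2) y →
        y = GVert.u p₀.1 false p₀.2 ∨ y = GVert.v p₀.1 true p₀.2 := by
      intro T hTG y h
      rcases (adj_vf cl p₀ y).mp (hTG h) with rfl | rfl | ⟨q, hq, rfl⟩
      · exact Or.inl rfl
      · exact Or.inr rfl
      · have hqocc : q ∈ occs cl x := mem_occs_of_next cl hq hp₀
        obtain rfl : q = p₀ := singleton_occs cl hp₀ hfix hqocc
        exact Or.inr rfl
    have hnbt : ∀ T : SimpleGraph (GVert n), T ≤ gadgetGraph cl →
        ∀ y, T.Adj (GVert.v p₀.1 true p₀.2) y →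
        y = GVert.u p₀.1 true p₀.2 ∨ y = GVert.v p₀.1 false p₀.2 := by
      intro T hTG y h
      rcases (adj_vt cl p₀ y).mp (hTG h) with rfl | rfl | h'
      · exact Or.inl rfl
      · exact Or.inr rfl
      · rw [hfix] at h'
        exact Or.inr h'
    have key : mEdge p₀ false ∈ R.edgeSet ∧ mEdge p₀ true ∈ B.edgeSet := by
      rcases hGor (eAe_mem cl p₀) with heB | heR
      · have hmf : mEdge p₀ false ∈ R.edgeSet := by
          obtain ⟨z, y, hzy, hzS, hyS⟩ := exists_cross hRtree.isConnected
            ({GVert.v p₀.1 false p₀.2} : Set (GVert n)) rfl (show GVert.s ∉ _ by simp)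
          rw [Set.mem_singleton_iff] at hzS
          subst hzS
          rcases hnbf R hRG y hzy with rfl | rfl
          · show s(GVert.u p₀.1 false p₀.2, GVert.v p₀.1 false p₀.2) ∈ _
            rw [Sym2.eq_swap]
            exact (SimpleGraph.mem_edgeSet _).mpr hzy
          · have : eAe p₀ ∈ R.edgeSet := (SimpleGraph.mem_edgeSet _).mpr hzy
            exact (hnBR heB this).elim
        have hmt : mEdge p₀ true ∈ B.edgeSet := by
          obtain ⟨z, y, hzy, hzS, hyS⟩ := exists_cross hBtree.isConnected
            ({GVert.v p₀.1 false p₀.2, GVert.v p₀.1 true p₀.2} : Set (GVert n))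
            (Or.inl rfl) (show GVert.s ∉ _ by simp)
          simp only [Set.mem_insert_iff, Set.mem_singleton_iff] at hzS hyS
          push_neg at hyS
          rcases hzS with rfl | rfl
          · rcases hnbf B hBG y hzy with rfl | rfl
            · have : mEdge p₀ false ∈ B.edgeSet := by
                show s(GVert.u p₀.1 false p₀.2, GVert.v p₀.1 false p₀.2) ∈ _
                rw [Sym2.eq_swap]
                exact (SimpleGraph.mem_edgeSet _).mpr hzy
              exact (hnBR this hmf).elim
            · exact absurd rfl hyS.2
          · rcases hnbt B hBG y hzy with rfl | rfl
            · show s(GVert.u p₀.1 true p₀.2, GVert.v p₀.1 true p₀.2) ∈ _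
              rw [Sym2.eq_swap]
              exact (SimpleGraph.mem_edgeSet _).mpr hzy
            · exact absurd rfl hyS.1
        exact ⟨hmf, hmt⟩
      · exfalso
        have hmtB : mEdge p₀ true ∈ B.edgeSet := by
          obtain ⟨z, y, hzy, hzS, hyS⟩ := exists_cross hBtree.isConnected
            ({GVert.v p₀.1 true p₀.2} : Set (GVert n)) rfl (show GVert.s ∉ _ by simp)
          rw [Set.mem_singleton_iff] at hzS
          subst hzS
          rcases hnbt B hBG y hzy with rfl | rfl
          · show s(GVert.u p₀.1 true p₀.2, GVert.v p₀.1 true p₀.2) ∈ _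
            rw [Sym2.eq_swap]
            exact (SimpleGraph.mem_edgeSet _).mpr hzy
          · have : eAe p₀ ∈ B.edgeSet := by
              show s(GVert.v p₀.1 false p₀.2, GVert.v p₀.1 true p₀.2) ∈ _
              rw [Sym2.eq_swap]
              exact (SimpleGraph.mem_edgeSet _).mpr hzy
            exact (hnBR this heR).elim
        have hmfB : mEdge p₀ false ∈ B.edgeSet := by
          obtain ⟨z, y, hzy, hzS, hyS⟩ := exists_cross hBtree.isConnected
            ({GVert.v p₀.1 false p₀.2} : Set (GVert n)) rfl (show GVert.s ∉ _ by simp)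
          rw [Set.mem_singleton_iff] at hzS
          subst hzS
          rcases hnbf B hBG y hzy with rfl | rfl
          · show s(GVert.u p₀.1 false p₀.2, GVert.v p₀.1 false p₀.2) ∈ _
            rw [Sym2.eq_swap]
            exact (SimpleGraph.mem_edgeSet _).mpr hzy
          · have : eAe p₀ ∈ B.edgeSet := (SimpleGraph.mem_edgeSet _).mpr hzy
            exact (hnBR this heR).elim
        obtain ⟨z, y, hzy, hzS, hyS⟩ := exists_cross hRtree.isConnected
          ({GVert.v p₀.1 false p₀.2, GVert.v p₀.1 true p₀.2} : Set (GVert n))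
          (Or.inl rfl) (show GVert.s ∉ _ by simp)
        simp only [Set.mem_insert_iff, Set.mem_singleton_iff] at hzS hyS
        push_neg at hyS
        rcases hzS with rfl | rfl
        · rcases hnbf R hRG y hzy with rfl | rfl
          · have : mEdge p₀ false ∈ R.edgeSet := by
              show s(GVert.u p₀.1 false p₀.2, GVert.v p₀.1 false p₀.2) ∈ _
              rw [Sym2.eq_swap]
              exact (SimpleGraph.mem_edgeSet _).mpr hzy
            exact hnBR hmfB this
          · exact absurd rfl hyS.2
        · rcases hnbt R hRG y hzy with rfl | rfl
          · have : mEdge p₀ true ∈ R.edgeSet := by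
              show s(GVert.u p₀.1 true p₀.2, GVert.v p₀.1 true p₀.2) ∈ _
              rw [Sym2.eq_swap]
              exact (SimpleGraph.mem_edgeSet _).mpr hzy
            exact hnBR hmtB this
          · exact absurd rfl hyS.1
    right
    intro p hp
    obtain rfl : p = p₀ := singleton_occs cl hp₀ hfix hp
    exact key
  · push_neg at hsing
    have hprop : ∀ p ∈ occs cl x, eBe cl p ∈ B.edgeSet →
        eBe cl (nextOcc cl p) ∈ B.edgeSet := by
      intro p hp hBp
      have hnp := nextOcc_mem cl hp
      have h1 : eAe (nextOcc cl p) ∉ B.edgeSet := fun h => hFlem p hp (hsing p hp) h hBp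
      have h2 : eAe (nextOcc cl p) ∈ R.edgeSet := (hGor (eAe_mem cl _)).resolve_left h1
      have h3 : eBe cl (nextOcc cl p) ∉ R.edgeSet :=
        fun h => hTlem _ hnp (hsing _ hnp) h2 h
      exact (hGor (eBe_mem cl _)).resolve_right h3
    by_cases hBall : ∃ p ∈ occs cl x, eBe cl p ∈ B.edgeSet
    · obtain ⟨p₁, hp₁, hB₁⟩ := hBall
      have hallB : ∀ q ∈ occs cl x, eBe cl q ∈ B.edgeSet := fun q hq =>
        occs_reach cl (fun a => eBe cl a ∈ B.edgeSet) hprop hp₁ hq hB₁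
      have hallA : ∀ q ∈ occs cl x, eAe q ∈ R.edgeSet := by
        intro q hq
        obtain ⟨p, hp, hpq⟩ := exists_prevOcc cl hq
        refine (hGor (eAe_mem cl q)).resolve_left (fun h => ?_)
        exact hFlem p hp (hsing p hp) (by rwa [hpq]) (hallB p hp)
      have C1 : ∀ p ∈ occs cl x, mEdge p false ∈ R.edgeSet ∨ mEdge p true ∈ R.edgeSet :=
        fun p hp => crossA cl R B hRG hRtree.isConnected hnRB hp hallB
      have C2 : ∀ p ∈ occs cl x,
          mEdge p true ∈ B.edgeSet ∨ mEdge (nextOcc cl p) false ∈ B.edgeSet :=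
        fun p hp => crossB cl B R hBG hBtree.isConnected (fun _ hb hr => hnBR hb hr) hp hallA
      have hprop' : ∀ p ∈ occs cl x, mEdge p false ∉ R.edgeSet →
          mEdge (nextOcc cl p) false ∉ R.edgeSet := by
        intro p hp h hn
        have ht : mEdge p true ∈ R.edgeSet := (C1 p hp).resolve_left h
        have h2 : mEdge p true ∉ B.edgeSet := fun hb => hnBR hb ht
        have h3 := (C2 p hp).resolve_left h2
        exact hnBR h3 hn
      by_cases hex : ∃ p ∈ occs cl x, mEdge p false ∉ R.edgeSet
      · obtain ⟨p₂, hp₂, h₂⟩ := hex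
        left
        intro p hp
        have hnotR : mEdge p false ∉ R.edgeSet :=
          occs_reach cl (fun a => mEdge a false ∉ R.edgeSet) hprop' hp₂ hp h₂
        exact ⟨(hGor (mEdge_mem cl p false)).resolve_right hnotR,
          (C1 p hp).resolve_left hnotR⟩
      · push_neg at hex
        right
        intro p hp
        refine ⟨hex p hp, ?_⟩
        have hnB : mEdge (nextOcc cl p) false ∉ B.edgeSet :=
          fun hb => hnBR hb (hex _ (nextOcc_mem cl hp))
        exact (C2 p hp).resolve_right hnB
    · have hallBR : ∀ q ∈ occs cl x, eBe cl q ∈ R.edgeSet := fun q hq =>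
        (hGor (eBe_mem cl q)).resolve_left (fun h => hBall ⟨q, hq, h⟩)
      have hallA : ∀ q ∈ occs cl x, eAe q ∈ B.edgeSet := fun q hq =>
        (hGor (eAe_mem cl q)).resolve_right (fun h => hTlem q hq (hsing q hq) h (hallBR q hq))
      have C1 : ∀ p ∈ occs cl x, mEdge p false ∈ B.edgeSet ∨ mEdge p true ∈ B.edgeSet :=
        fun p hp => crossA cl B R hBG hBtree.isConnected (fun _ hb hr => hnBR hb hr) hp hallBR
      have C2 : ∀ p ∈ occs cl x,
          mEdge p true ∈ R.edgeSet ∨ mEdge (nextOcc cl p) false ∈ R.edgeSet :=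
        fun p hp => crossB cl R B hRG hRtree.isConnected hnRB hp hallA
      have hprop' : ∀ p ∈ occs cl x, mEdge p false ∉ B.edgeSet →
          mEdge (nextOcc cl p) false ∉ B.edgeSet := by
        intro p hp h hn
        have ht : mEdge p true ∈ B.edgeSet := (C1 p hp).resolve_left h
        have h2 : mEdge p true ∉ R.edgeSet := fun hr => hnBR ht hr
        have h3 := (C2 p hp).resolve_left h2
        exact hnBR hn h3
      by_cases hex : ∃ p ∈ occs cl x, mEdge p false ∉ B.edgeSet
      · obtain ⟨p₂, hp₂, h₂⟩ := hex
        right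
        intro p hp
        have hnotB : mEdge p false ∉ B.edgeSet :=
          occs_reach cl (fun a => mEdge a false ∉ B.edgeSet) hprop' hp₂ hp h₂
        exact ⟨(hGor (mEdge_mem cl p false)).resolve_left hnotB,
          (C1 p hp).resolve_left hnotB⟩
      · push_neg at hex
        left
        intro p hp
        refine ⟨hex p hp, ?_⟩
        have hnR : mEdge (nextOcc cl p) false ∉ R.edgeSet :=
          fun hr => hnBR (hex _ (nextOcc_mem cl hp)) hr
        exact (C2 p hp).resolve_right hnR
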